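/- Let F be a group and N a normal abelian subgroup of exponent 2 containing [F,F]. Then for any x, y, z in F with z in N, the iterated commutators satisfy [x,[y,z]] = [y,[x,z]]. -/

import Mathlib

open scoped commutatorElement

/-- If `N` is an abelian normal subgroup of `F` of exponent 2 containing `[F,F]`,
then for `z ∈ N` we have `[x,[y,z]] = [y,[x,z]]`. -/
theorem commutator_swap_of_mem_of_exponent_two {F : Type*} [Group F] (N : Subgroup F)
    (hN : N.Normal) (habel : ∀ a ∈ N, ∀ b ∈ N, a * b = b * a)
    (hexp : ∀ a ∈ N, a ^ 2 = 1) (hcomm : commutator F ≤ N)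
    (x y z : F) (hz : z ∈ N) :
    ⁅x, ⁅y, z⁆⁆ = ⁅y, ⁅x, z⁆⁆ := by
  have hinv : ∀ w ∈ N, w⁻¹ = w := fun w hw =>
    inv_eq_of_mul_eq_one_right (by rw [← pow_two]; exact hexp w hw)
  have ha : x*z*x⁻¹ ∈ N := hN.conj_mem z hz x
  have hb : y*z*y⁻¹ ∈ N := hN.conj_mem z hz y
  have hd : y*(x*z*x⁻¹)*y⁻¹ ∈ N := hN.conj_mem _ ha y
  have hu : ⁅x,y⁆ ∈ N :=
    hcomm (Subgroup.commutator_mem_commutator (Subgroup.mem_top x) (Subgroup.mem_top y))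
  have hcd : x*(y*z*y⁻¹)*x⁻¹ = y*(x*z*x⁻¹)*y⁻¹ := by
    have h1 : x*(y*z*y⁻¹)*x⁻¹ = ⁅x,y⁆ * (y*(x*z*x⁻¹)*y⁻¹) * ⁅x,y⁆⁻¹ := by group
    rw [h1, habel _ hu _ hd, mul_inv_cancel_right]
  have hLHS : ⁅x, ⁅y, z⁆⁆
      = (x*(y*z*y⁻¹)*x⁻¹) * (x*z⁻¹*x⁻¹) * (z * (y*z*y⁻¹)⁻¹) := by group
  have hRHS : ⁅y, ⁅x, z⁆⁆
      = (y*(x*z*x⁻¹)*y⁻¹) * (y*z⁻¹*y⁻¹) * (z * (x*z*x⁻¹)⁻¹) := by group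
  rw [hLHS, hRHS, hinv z hz, hinv _ ha, hinv _ hb, hcd]
  have e : ∀ p ∈ N, ∀ q ∈ N, p * (z * q) = q * (z * p) := fun p hp q hq => by
    rw [← mul_assoc, habel _ hp _ hz, mul_assoc, habel _ hp _ hq,
      ← mul_assoc, habel _ hz _ hq, mul_assoc]
  rw [mul_assoc, mul_assoc, e _ ha _ hb]
  simp only [mul_assoc]
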